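/- There exists an invariant state ρ whose support equals the recurrent subspace R, i.e., supp(ρ) = sup{supp(σ) : σ an invariant state}. Consequently, R is an enclosure: every state with support in R has Φ_t-image with support in R for all t ≥ 0. -/

import Mathlib

open Matrix
open scoped ComplexOrder InnerProductSpace

namespace QDSAux
variable {n : ℕ}




/-- membership in range of toLin' -/
lemma mem_range_toLin'_iff (A : Matrix (Fin n) (Fin n) ℂ) (x : Fin n → ℂ) :
    x ∈ LinearMap.range (Matrix.toLin' A) ↔ ∃ y, A *ᵥ y = x := by
  simp [Matrix.toLin'_apply]

lemma mem_range_toEuclideanLin_iff (A : Matrix (Fin n) (Fin n) ℂ)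
    (v : EuclideanSpace ℂ (Fin n)) :
    v ∈ LinearMap.range (Matrix.toEuclideanLin A) ↔
      ∃ y : Fin n → ℂ, A *ᵥ y = (WithLp.equiv 2 (Fin n → ℂ)) v := by
  constructor
  · rintro ⟨u, rfl⟩
    exact ⟨(WithLp.equiv 2 (Fin n → ℂ)) u, by
      rw [Matrix.toEuclideanLin_apply]; simp⟩
  · rintro ⟨y, hy⟩
    refine ⟨(WithLp.equiv 2 (Fin n → ℂ)).symm y, ?_⟩
    apply (WithLp.equiv 2 (Fin n → ℂ)).injective
    rw [Matrix.toEuclideanLin_apply]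
    simp [hy]

lemma range_toLin'_le_iff (A B : Matrix (Fin n) (Fin n) ℂ) :
    LinearMap.range (Matrix.toLin' A) ≤ LinearMap.range (Matrix.toLin' B) ↔
      LinearMap.range (Matrix.toEuclideanLin A) ≤ LinearMap.range (Matrix.toEuclideanLin B) := by
  constructor
  · intro h v hv
    rw [mem_range_toEuclideanLin_iff] at hv ⊢
    obtain ⟨y, hy⟩ := hv
    have : (WithLp.equiv 2 (Fin n → ℂ)) v ∈ LinearMap.range (Matrix.toLin' A) :=
      (mem_range_toLin'_iff A _).mpr ⟨y, hy⟩
    exact (mem_range_toLin'_iff B _).mp (h this)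
  · intro h x hx
    rw [mem_range_toLin'_iff] at hx ⊢
    obtain ⟨y, hy⟩ := hx
    have : (WithLp.equiv 2 (Fin n → ℂ)).symm x ∈ LinearMap.range (Matrix.toEuclideanLin A) := by
      rw [mem_range_toEuclideanLin_iff]
      exact ⟨y, by simpa using hy⟩
    have h2 := h this
    rw [mem_range_toEuclideanLin_iff] at h2
    obtain ⟨z, hz⟩ := h2
    exact ⟨z, by simpa using hz⟩





lemma isSymmetric_range_eq {E : Type*} [NormedAddCommGroup E] [InnerProductSpace ℂ E]
    [FiniteDimensional ℂ E] {T : E →ₗ[ℂ] E} (hT : T.IsSymmetric) :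
    LinearMap.range T = (LinearMap.ker T)ᗮ := by
  have h1 : (LinearMap.range T)ᗮ = LinearMap.ker T := by
    ext x
    simp only [Submodule.mem_orthogonal, LinearMap.mem_range, LinearMap.mem_ker]
    constructor
    · intro h
      have h2 : ⟪T (T x), x⟫_ℂ = 0 := h _ ⟨T x, rfl⟩
      rw [hT (T x) x] at h2
      exact inner_self_eq_zero.mp h2
    · rintro h u ⟨y, rfl⟩
      rw [hT y x, h, inner_zero_right]
  have h2 := congrArg Submodule.orthogonal h1
  rwa [Submodule.orthogonal_orthogonal] at h2





lemma toEuclideanLin_eq_zero_iff (A : Matrix (Fin n) (Fin n) ℂ) (v : EuclideanSpace ℂ (Fin n)) :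
    Matrix.toEuclideanLin A v = 0 ↔ A *ᵥ (WithLp.equiv 2 (Fin n → ℂ)) v = 0 := by
  rw [Matrix.toEuclideanLin_apply]
  constructor
  · intro h
    have := congrArg (WithLp.equiv 2 (Fin n → ℂ)) h
    simpa using this
  · intro h
    rw [show A *ᵥ v.ofLp = 0 from h]
    simp

/-- kernel inclusion from Loewner order -/
lemma ker_le_of_loewner {A B : Matrix (Fin n) (Fin n) ℂ} (hA : A.PosSemidef)
    (hBA : (B - A).PosSemidef) :
    LinearMap.ker (Matrix.toEuclideanLin B) ≤ LinearMap.ker (Matrix.toEuclideanLin A) := by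
  intro v hv
  rw [LinearMap.mem_ker, toEuclideanLin_eq_zero_iff] at hv ⊢
  set x := (WithLp.equiv 2 (Fin n → ℂ)) v with hx
  have h1 : star x ⬝ᵥ B *ᵥ x = 0 := by rw [hv, dotProduct_zero]
  have h2 : (0:ℂ) ≤ star x ⬝ᵥ A *ᵥ x := hA.dotProduct_mulVec_nonneg x
  have h3 : (0:ℂ) ≤ star x ⬝ᵥ (B - A) *ᵥ x := hBA.dotProduct_mulVec_nonneg x
  have h4 : star x ⬝ᵥ (B - A) *ᵥ x = - (star x ⬝ᵥ A *ᵥ x) := by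
    rw [sub_mulVec, dotProduct_sub, h1, zero_sub]
  rw [h4] at h3
  have h5 : star x ⬝ᵥ A *ᵥ x = 0 := le_antisymm (neg_nonneg.mp h3) h2
  exact (hA.dotProduct_mulVec_zero_iff x).mp h5

/-- hermitian: range monotone wrt reverse kernel inclusion -/
lemma range_le_of_ker_le {A B : Matrix (Fin n) (Fin n) ℂ} (hA : A.IsHermitian)
    (hB : B.IsHermitian)
    (h : LinearMap.ker (Matrix.toEuclideanLin B) ≤ LinearMap.ker (Matrix.toEuclideanLin A)) :
    LinearMap.range (Matrix.toEuclideanLin A) ≤ LinearMap.range (Matrix.toEuclideanLin B) := by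
  rw [isSymmetric_range_eq (Matrix.isHermitian_iff_isSymmetric.mp hA),
    isSymmetric_range_eq (Matrix.isHermitian_iff_isSymmetric.mp hB)]
  exact Submodule.orthogonal_le h

/-- Loewner order gives support inclusion. -/
lemma range_le_of_loewner {A B : Matrix (Fin n) (Fin n) ℂ} (hA : A.PosSemidef)
    (hB : B.PosSemidef) (hBA : (B - A).PosSemidef) :
    LinearMap.range (Matrix.toLin' A) ≤ LinearMap.range (Matrix.toLin' B) := by
  rw [range_toLin'_le_iff]
  exact range_le_of_ker_le hA.1 hB.1 (ker_le_of_loewner hA hBA)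

/-- support of sum of PSD matrices -/
lemma range_add {A B : Matrix (Fin n) (Fin n) ℂ} (hA : A.PosSemidef) (hB : B.PosSemidef) :
    LinearMap.range (Matrix.toLin' (A + B)) =
      LinearMap.range (Matrix.toLin' A) ⊔ LinearMap.range (Matrix.toLin' B) := by
  refine le_antisymm ?_ (sup_le ?_ ?_)
  · rintro x hx
    rw [mem_range_toLin'_iff] at hx
    obtain ⟨y, rfl⟩ := hx
    rw [add_mulVec]
    exact Submodule.add_mem_sup ((mem_range_toLin'_iff A _).mpr ⟨y, rfl⟩)
      ((mem_range_toLin'_iff B _).mpr ⟨y, rfl⟩)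
  · exact range_le_of_loewner hA (hA.add hB) (by simpa using hB)
  · exact range_le_of_loewner hB (hA.add hB) (by simpa using hA)

/-- nonneg real smul preserves PSD -/
lemma psd_smul {c : ℝ} (hc : 0 ≤ c) {A : Matrix (Fin n) (Fin n) ℂ} (hA : A.PosSemidef) :
    ((c : ℂ) • A).PosSemidef := by
  refine .of_dotProduct_mulVec_nonneg ?_ ?_
  · show ((c : ℂ) • A)ᴴ = (c : ℂ) • A
    rw [conjTranspose_smul, hA.1.eq]
    norm_num
  · intro x
    rw [smul_mulVec, dotProduct_smul, smul_eq_mul]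
    exact mul_nonneg (Complex.zero_le_real.mpr hc) (hA.dotProduct_mulVec_nonneg x)


lemma unitary_conj_psd {U : Matrix (Fin n) (Fin n) ℂ} (f : Fin n → ℝ) (hf : ∀ i, 0 ≤ f i) :
    (U * Matrix.diagonal (fun i => (f i : ℂ)) * star U).PosSemidef := by
  have h := (Matrix.posSemidef_diagonal_iff.mpr
    (fun i => Complex.zero_le_real.mpr (hf i))).mul_mul_conjTranspose_same U
  simpa [Matrix.star_eq_conjTranspose] using h

lemma unitary_conj_mul {U : Matrix (Fin n) (Fin n) ℂ} (hU : star U * U = 1)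
    (f g : Fin n → ℂ) :
    (U * Matrix.diagonal f * star U) * (U * Matrix.diagonal g * star U) =
      U * Matrix.diagonal (fun i => f i * g i) * star U := by
  have key : ∀ X : Matrix (Fin n) (Fin n) ℂ, star U * (U * X) = X := fun X => by
    rw [← mul_assoc, hU, one_mul]
  rw [← Matrix.diagonal_mul_diagonal]
  simp only [mul_assoc]
  rw [key]

lemma conj_smul (W : Matrix (Fin n) (Fin n) ℂ) (a : ℂ) (f : Fin n → ℂ) :
    a • (W * Matrix.diagonal f * star W) = W * Matrix.diagonal (fun i => a * f i) * star W := by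
  have h : Matrix.diagonal (fun i => a * f i) = a • Matrix.diagonal f := by
    rw [← Matrix.diagonal_smul]; rfl
  rw [h, mul_smul_comm, smul_mul_assoc]

lemma conj_sub (W : Matrix (Fin n) (Fin n) ℂ) (f g : Fin n → ℂ) :
    W * Matrix.diagonal f * star W - W * Matrix.diagonal g * star W =
      W * Matrix.diagonal (fun i => f i - g i) * star W := by
  have h : Matrix.diagonal (fun i => f i - g i) =
      Matrix.diagonal f - Matrix.diagonal g := (Matrix.diagonal_sub f g).symm
  rw [h, mul_sub, sub_mul]

/-- Domination: if `supp A ⊆ supp B` for PSD `A`, `B`, then `A ≤ c • B` for some `c > 0`. -/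
lemma exists_smul_sub_posSemidef {A B : Matrix (Fin n) (Fin n) ℂ} (hA : A.PosSemidef)
    (hB : B.PosSemidef)
    (h : LinearMap.range (Matrix.toLin' A) ≤ LinearMap.range (Matrix.toLin' B)) :
    ∃ c : ℝ, 0 < c ∧ ((c : ℂ) • B - A).PosSemidef := by
  classical
  set U : Matrix (Fin n) (Fin n) ℂ := (hB.1.eigenvectorUnitary : Matrix (Fin n) (Fin n) ℂ)
    with hUdef
  have hU1 : U * star U = 1 := (Matrix.mem_unitaryGroup_iff).mp hB.1.eigenvectorUnitary.2
  have hU2 : star U * U = 1 := (Matrix.mem_unitaryGroup_iff').mp hB.1.eigenvectorUnitary.2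
  set μ : Fin n → ℝ := hB.1.eigenvalues with hμdef
  have hμ0 : ∀ i, 0 ≤ μ i := hB.eigenvalues_nonneg
  have hBspec : B = U * Matrix.diagonal (fun i => (μ i : ℂ)) * star U := by
    have h := hB.1.spectral_theorem
    rw [Unitary.conjStarAlgAut_apply] at h
    simpa [Function.comp_def] using h
  set d : Fin n → ℝ := fun i => if μ i = 0 then 0 else 1 with hddef
  have hd0 : ∀ i, 0 ≤ d i := fun i => by by_cases hi : μ i = 0 <;> simp [hddef, hi]
  set P : Matrix (Fin n) (Fin n) ℂ := U * Matrix.diagonal (fun i => (d i : ℂ)) * star U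
    with hPdef
  have hPpsd : P.PosSemidef := unitary_conj_psd d hd0
  -- P is idempotent, hermitian, and PB = B
  have hdd : (fun i => ((d i : ℂ)) * ((d i : ℂ))) = (fun i => ((d i : ℂ))) :=
    funext fun i => by by_cases hi : μ i = 0 <;> simp [hddef, hi]
  have hPP : P * P = P := by rw [hPdef, unitary_conj_mul hU2, hdd]
  have hdμ : (fun i => ((d i : ℂ)) * ((μ i : ℂ))) = (fun i => ((μ i : ℂ))) :=
    funext fun i => by by_cases hi : μ i = 0 <;> simp [hddef, hi]
  have hPB : P * B = B := by
    rw [hPdef, hBspec, unitary_conj_mul hU2, hdμ]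
  have hPH : star P = P := by
    rw [Matrix.star_eq_conjTranspose]; exact hPpsd.1.eq
  -- P acts as identity on range of B, hence PA = A
  have hPA : P * A = A := by
    apply Matrix.toLin'.injective
    apply LinearMap.ext
    intro x
    have hx : A *ᵥ x ∈ LinearMap.range (Matrix.toLin' B) :=
      h ((mem_range_toLin'_iff A _).mpr ⟨x, rfl⟩)
    obtain ⟨y, hy⟩ := (mem_range_toLin'_iff B _).mp hx
    simp only [Matrix.toLin'_apply]
    rw [← Matrix.mulVec_mulVec, ← hy, Matrix.mulVec_mulVec, hPB]
  have hAP : A * P = A := by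
    have h2 := congrArg star hPA
    rw [Matrix.star_mul, hPH, Matrix.star_eq_conjTranspose A, hA.1.eq] at h2
    exact h2
  -- constants
  set ν : Fin n → ℝ := hA.1.eigenvalues with hνdef
  have hν0 : ∀ i, 0 ≤ ν i := hA.eigenvalues_nonneg
  set t : ℝ := ∑ i, ν i with htdef
  have ht0 : 0 ≤ t := Finset.sum_nonneg fun i _ => hν0 i
  set S : ℝ := ∑ i, (if μ i = 0 then 0 else (μ i)⁻¹) with hSdef
  have hS0 : 0 ≤ S := Finset.sum_nonneg fun i _ => by
    by_cases hi : μ i = 0 <;> simp [hi, inv_nonneg.mpr (hμ0 i)]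
  refine ⟨t * S + 1, by positivity, ?_⟩
  set c : ℝ := t * S + 1 with hcdef
  -- first piece : c•B - t•P is PSD
  have hpiece1 : ((c : ℂ) • B - (t : ℂ) • P).PosSemidef := by
    have heq : (c : ℂ) • B - (t : ℂ) • P =
        U * Matrix.diagonal (fun i => ((c * μ i - t * d i : ℝ) : ℂ)) * star U := by
      rw [hBspec, hPdef, conj_smul, conj_smul, conj_sub]
      congr 1
      congr 1
      funext i
      push_cast
      ring
    rw [heq]
    apply unitary_conj_psd
    intro i
    by_cases hi : μ i = 0
    · simp [hddef, hi]
    · have hμpos : 0 < μ i := lt_of_le_of_ne (hμ0 i) (Ne.symm hi)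
      have hSi : (μ i)⁻¹ ≤ S := by
        rw [hSdef]
        refine Finset.single_le_sum (f := fun j => if μ j = 0 then 0 else (μ j)⁻¹)
          (fun j _ => ?_) (Finset.mem_univ i) |>.trans_eq' (by simp [hi])
        by_cases hj : μ j = 0 <;> simp [hj, inv_nonneg.mpr (hμ0 j)]
      have hinv : (μ i)⁻¹ * μ i = 1 := inv_mul_cancel₀ hi
      simp only [hddef, hi, if_false]
      have h1 : t * (μ i)⁻¹ * μ i ≤ t * S * μ i := by
        apply mul_le_mul_of_nonneg_right _ (hμ0 i)
        exact mul_le_mul_of_nonneg_left hSi ht0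
      rw [mul_assoc, hinv, mul_one] at h1
      nlinarith [hμpos]
  -- second piece : t•P - A is PSD
  have hone : ((t : ℂ) • (1 : Matrix (Fin n) (Fin n) ℂ) - A).PosSemidef := by
    set V : Matrix (Fin n) (Fin n) ℂ := (hA.1.eigenvectorUnitary : Matrix (Fin n) (Fin n) ℂ)
    have hV1 : V * star V = 1 := (Matrix.mem_unitaryGroup_iff).mp hA.1.eigenvectorUnitary.2
    have hAspec : A = V * Matrix.diagonal (fun i => (ν i : ℂ)) * star V := by
      have h := hA.1.spectral_theorem
      rw [Unitary.conjStarAlgAut_apply] at h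
      simpa [Function.comp_def] using h
    have hsm : (t : ℂ) • (1 : Matrix (Fin n) (Fin n) ℂ) =
        V * Matrix.diagonal (fun _ => (t : ℂ)) * star V := by
      rw [← Matrix.smul_one_eq_diagonal, mul_smul_comm, smul_mul_assoc, mul_one, hV1]
    have heq : (t : ℂ) • (1 : Matrix (Fin n) (Fin n) ℂ) - A =
        V * Matrix.diagonal (fun i => ((t - ν i : ℝ) : ℂ)) * star V := by
      rw [hsm, hAspec, conj_sub]
      congr 1
      congr 1
      funext i
      push_cast
      ring
    rw [heq]
    apply unitary_conj_psd
    intro i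
    have hle : ν i ≤ t := Finset.single_le_sum (fun j _ => hν0 j) (Finset.mem_univ i)
    linarith
  have hpiece2 : ((t : ℂ) • P - A).PosSemidef := by
    have hconj := hone.mul_mul_conjTranspose_same P
    have hPHc : Pᴴ = P := hPpsd.1.eq
    have heq : P * ((t : ℂ) • (1 : Matrix (Fin n) (Fin n) ℂ) - A) * Pᴴ =
        (t : ℂ) • P - A := by
      rw [hPHc, mul_sub, sub_mul, mul_smul_comm, mul_one, smul_mul_assoc, hPP, hPA, hAP]
    rwa [heq] at hconj
  have hsum := hpiece1.add hpiece2
  rwa [sub_add_sub_cancel] at hsum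

end QDSAux

/-- There exists an invariant state whose support equals the recurrent
subspace `R` (the span/supremum of supports of all invariant states); consequently `R`
is an enclosure. -/
theorem exists_invariant_state_support_eq_recurrent {n : ℕ}
    (Φ : ℝ → Matrix (Fin n) (Fin n) ℂ →ₗ[ℂ] Matrix (Fin n) (Fin n) ℂ)
    (hsemi : ∀ s t : ℝ, 0 ≤ s → 0 ≤ t → Φ (s + t) = (Φ s).comp (Φ t))
    (hTP : ∀ t : ℝ, 0 ≤ t → ∀ X : Matrix (Fin n) (Fin n) ℂ, (Φ t X).trace = X.trace)
    (hPos : ∀ t : ℝ, 0 ≤ t → ∀ X : Matrix (Fin n) (Fin n) ℂ,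
      X.PosSemidef → (Φ t X).PosSemidef)
    (hexists : ∃ σ : Matrix (Fin n) (Fin n) ℂ,
      (σ.PosSemidef ∧ σ.trace = 1) ∧ ∀ t : ℝ, 0 ≤ t → Φ t σ = σ)
    (R : Submodule ℂ (Fin n → ℂ))
    (hR : R = sSup {V : Submodule ℂ (Fin n → ℂ) |
      ∃ σ : Matrix (Fin n) (Fin n) ℂ, (σ.PosSemidef ∧ σ.trace = 1) ∧
        (∀ t : ℝ, 0 ≤ t → Φ t σ = σ) ∧ V = LinearMap.range (Matrix.toLin' σ)}) :
    (∃ ρ : Matrix (Fin n) (Fin n) ℂ, (ρ.PosSemidef ∧ ρ.trace = 1) ∧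
      (∀ t : ℝ, 0 ≤ t → Φ t ρ = ρ) ∧ LinearMap.range (Matrix.toLin' ρ) = R) ∧
    (∀ σ : Matrix (Fin n) (Fin n) ℂ, (σ.PosSemidef ∧ σ.trace = 1) →
      LinearMap.range (Matrix.toLin' σ) ≤ R →
      ∀ t : ℝ, 0 ≤ t → LinearMap.range (Matrix.toLin' (Φ t σ)) ≤ R) := by
  classical
  subst hR
  obtain ⟨σ₀, hσ₀, hinv₀⟩ := hexists
  set T : Set (Matrix (Fin n) (Fin n) ℂ) :=
    {σ | (σ.PosSemidef ∧ σ.trace = 1) ∧ ∀ t : ℝ, 0 ≤ t → Φ t σ = σ} with hTdef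
  have hT0 : σ₀ ∈ T := ⟨hσ₀, hinv₀⟩
  set r : Matrix (Fin n) (Fin n) ℂ → ℕ :=
    fun σ => Module.finrank ℂ (LinearMap.range (Matrix.toLin' σ)) with hrdef
  have hbdd : BddAbove (r '' T) := by
    refine ⟨n, ?_⟩
    rintro k ⟨σ, -, rfl⟩
    calc r σ ≤ Module.finrank ℂ (Fin n → ℂ) := Submodule.finrank_le _
    _ = n := by simp
  have hne : (r '' T).Nonempty := ⟨r σ₀, σ₀, hT0, rfl⟩
  obtain ⟨ρ, hρT, hρr⟩ := Nat.sSup_mem hne hbdd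
  -- ρ has maximal support among invariant states
  have key : ∀ σ ∈ T, LinearMap.range (Matrix.toLin' σ) ≤ LinearMap.range (Matrix.toLin' ρ) := by
    intro σ hσT
    set τ : Matrix (Fin n) (Fin n) ℂ := (((2:ℝ)⁻¹ : ℝ) : ℂ) • (σ + ρ) with hτdef
    have hτT : τ ∈ T := by
      refine ⟨⟨QDSAux.psd_smul (by norm_num) (hσT.1.1.add hρT.1.1), ?_⟩, ?_⟩
      · rw [hτdef, Matrix.trace_smul, Matrix.trace_add, hσT.1.2, hρT.1.2]
        norm_num
      · intro t ht
        rw [hτdef, _root_.map_smul, map_add, hσT.2 t ht, hρT.2 t ht]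
    have hrange : LinearMap.range (Matrix.toLin' τ) =
        LinearMap.range (Matrix.toLin' σ) ⊔ LinearMap.range (Matrix.toLin' ρ) := by
      rw [hτdef, _root_.map_smul, LinearMap.range_smul _ _ (by norm_num),
        QDSAux.range_add hσT.1.1 hρT.1.1]
    have hle : LinearMap.range (Matrix.toLin' ρ) ≤ LinearMap.range (Matrix.toLin' τ) :=
      hrange ▸ le_sup_right
    have hfr : Module.finrank ℂ (LinearMap.range (Matrix.toLin' τ)) ≤
        Module.finrank ℂ (LinearMap.range (Matrix.toLin' ρ)) := by
      have h1 : r τ ≤ sSup (r '' T) := le_csSup hbdd ⟨τ, hτT, rfl⟩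
      rw [← hρr] at h1
      exact h1
    have heq := Submodule.eq_of_le_of_finrank_le hle hfr
    calc LinearMap.range (Matrix.toLin' σ)
        ≤ LinearMap.range (Matrix.toLin' σ) ⊔ LinearMap.range (Matrix.toLin' ρ) := le_sup_left
      _ = LinearMap.range (Matrix.toLin' τ) := hrange.symm
      _ = LinearMap.range (Matrix.toLin' ρ) := heq.symm
  have hRρ : LinearMap.range (Matrix.toLin' ρ) = sSup {V : Submodule ℂ (Fin n → ℂ) |
      ∃ σ : Matrix (Fin n) (Fin n) ℂ, (σ.PosSemidef ∧ σ.trace = 1) ∧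
        (∀ t : ℝ, 0 ≤ t → Φ t σ = σ) ∧ V = LinearMap.range (Matrix.toLin' σ)} := by
    apply le_antisymm
    · exact le_sSup ⟨ρ, hρT.1, hρT.2, rfl⟩
    · apply sSup_le
      rintro V ⟨σ, hσ1, hσ2, rfl⟩
      exact key σ ⟨hσ1, hσ2⟩
  constructor
  · exact ⟨ρ, hρT.1, hρT.2, hRρ⟩
  · intro σ hσ hσR t ht
    rw [← hRρ] at hσR ⊢
    obtain ⟨c, hc, hcρ⟩ := QDSAux.exists_smul_sub_posSemidef hσ.1 hρT.1.1 hσR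
    have h1 : (Φ t ((c : ℂ) • ρ - σ)).PosSemidef := hPos t ht _ hcρ
    have h2 : Φ t ((c : ℂ) • ρ - σ) = (c : ℂ) • ρ - Φ t σ := by
      rw [map_sub, _root_.map_smul, hρT.2 t ht]
    rw [h2] at h1
    have h3 : (Φ t σ).PosSemidef := hPos t ht σ hσ.1
    have h4 := QDSAux.range_le_of_loewner h3 (QDSAux.psd_smul hc.le hρT.1.1) h1
    have h5 : LinearMap.range (Matrix.toLin' ((c : ℂ) • ρ)) =
        LinearMap.range (Matrix.toLin' ρ) := by
      rw [_root_.map_smul, LinearMap.range_smul]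
      exact_mod_cast Complex.ofReal_ne_zero.mpr hc.ne'
    rwa [h5] at h4
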